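/- Let t ∈ ℝ be irrational and consider the subgroup Γ_t := {([0], [−t·u], [0], [u], [v]) : u, v ∈ ℝ} of the 5-torus (ℝ/2πℤ)^5, where [·] denotes the class of a real number modulo 2πℤ. Then the closure of Γ_t equals the 3-dimensional subtorus {([0], a, [0], b, c) : a, b, c ∈ ℝ/2πℤ}, and Γ_t is a proper subset of its closure; in particular Γ_t is neither closed nor compact (so for irrational t no leaf of the characteristic foliation is a 2-torus and the deformed coisotropic submanifold is not integral). -/

import Mathlib

set_option maxHeartbeats 1000000

/-- The leaf through the origin of the characteristic foliation `F'_t` inside the 5-torus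
`(ℝ/2πℤ)^5`: the subgroup `{([0], [−t·u], [0], [u], [v]) : u, v ∈ ℝ}`. -/
def leafGroup (t : ℝ) : Set (Fin 5 → AddCircle (2 * Real.pi)) :=
  {x | ∃ u v : ℝ,
    x = ![(0 : AddCircle (2 * Real.pi)), ((-t * u : ℝ) : AddCircle (2 * Real.pi)),
          (0 : AddCircle (2 * Real.pi)), ((u : ℝ) : AddCircle (2 * Real.pi)),
          ((v : ℝ) : AddCircle (2 * Real.pi))]}

open AddSubgroup in
/-- For irrational `t`, multiples of `[-2πt]` are dense in `ℝ/2πℤ`. -/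
lemma dense_zmultiples_of_irrational (t : ℝ) (ht : Irrational t) :
    Dense ((zmultiples ((-(2 * Real.pi) * t : ℝ) : AddCircle (2 * Real.pi)) :
      AddSubgroup (AddCircle (2 * Real.pi))) : Set (AddCircle (2 * Real.pi))) := by
  have hppos : (0:ℝ) < 2 * Real.pi := by positivity
  -- the subgroup of ℝ generated by -2πt and 2π is dense
  have hH : Dense ((closure {-(2 * Real.pi) * t, 2 * Real.pi} : AddSubgroup ℝ) : Set ℝ) := by
    rcases AddSubgroup.dense_or_cyclic
      (closure {-(2 * Real.pi) * t, 2 * Real.pi}) with h | ⟨c, hc⟩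
    · exact h
    · exfalso
      have haH : -(2 * Real.pi) * t ∈
          AddSubgroup.closure ({-(2 * Real.pi) * t, 2 * Real.pi} : Set ℝ) :=
        AddSubgroup.subset_closure (Set.mem_insert _ _)
      have hpH : 2 * Real.pi ∈
          AddSubgroup.closure ({-(2 * Real.pi) * t, 2 * Real.pi} : Set ℝ) :=
        AddSubgroup.subset_closure (Set.mem_insert_of_mem _ rfl)
      rw [hc] at haH hpH
      obtain ⟨m, hm⟩ := AddSubgroup.mem_closure_singleton.mp haH
      obtain ⟨n, hn⟩ := AddSubgroup.mem_closure_singleton.mp hpH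
      rw [zsmul_eq_mul] at hm hn
      have hc0 : c ≠ 0 := by
        rintro rfl; rw [mul_zero] at hn; exact hppos.ne' hn.symm
      have hn0 : (n : ℝ) ≠ 0 := by
        intro h; rw [h, zero_mul] at hn; exact hppos.ne' hn.symm
      have h3 : c * ((m : ℝ) + n * t) = 0 := by linear_combination hm + t * hn
      have h4 : (m : ℝ) + n * t = 0 := by
        rcases mul_eq_zero.mp h3 with h | h
        · exact absurd h hc0
        · exact h
      have ht' : t = -((m : ℝ) / n) := by field_simp; linarith
      exact (ht.ne_rat (-((m : ℚ) / n))) (by rw [ht']; push_cast; ring)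
  -- push density to the quotient
  have hmk : Continuous ((↑) : ℝ → AddCircle (2 * Real.pi)) :=
    AddCircle.continuous_mk' (2 * Real.pi)
  have hdr : DenseRange ((↑) : ℝ → AddCircle (2 * Real.pi)) :=
    (QuotientAddGroup.mk'_surjective _).denseRange
  have himg : Dense (((↑) : ℝ → AddCircle (2 * Real.pi)) ''
      (closure {-(2 * Real.pi) * t, 2 * Real.pi} : AddSubgroup ℝ)) :=
    hdr.dense_image hmk hH
  refine himg.mono ?_
  rintro x ⟨y, hy, rfl⟩
  have hle : (closure {-(2 * Real.pi) * t, 2 * Real.pi} : AddSubgroup ℝ) ≤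
      AddSubgroup.comap (QuotientAddGroup.mk' (zmultiples (2 * Real.pi)))
        (zmultiples ((-(2 * Real.pi) * t : ℝ) : AddCircle (2 * Real.pi))) := by
    rw [closure_le]
    rintro z (rfl | rfl)
    · exact AddSubgroup.mem_comap.mpr (mem_zmultiples _)
    · refine AddSubgroup.mem_comap.mpr ?_
      have hpe : (QuotientAddGroup.mk' (zmultiples (2 * Real.pi))) (2 * Real.pi)
          = ((2 * Real.pi : ℝ) : AddCircle (2 * Real.pi)) := rfl
      rw [hpe, AddCircle.coe_period]
      exact zero_mem _
  exact hle hy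

lemma pi_ne_int_mul (k : ℤ) : Real.pi ≠ 2 * Real.pi * k := by
  intro h
  have h2 : (1 : ℝ) = 2 * k :=
    mul_left_cancel₀ Real.pi_ne_zero (by rw [mul_one]; linear_combination h)
  have : (2 * k : ℤ) = 1 := by exact_mod_cast h2.symm
  omega

/-- For irrational `t` the leaf `Γ_t` through the origin has closure the 3-dimensional
subtorus `{([0], a, [0], b, c)}`, is a proper subset of its closure, and so is neither
closed nor compact (whence no leaf is a 2-torus and the deformed coisotropic submanifold
is not integral). -/
theorem irrational_leaf_not_closed_not_compact
    (t : ℝ) (ht : Irrational t) :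
    closure (leafGroup t)
        = {x : Fin 5 → AddCircle (2 * Real.pi) | x 0 = 0 ∧ x 2 = 0} ∧
    leafGroup t ⊂ closure (leafGroup t) ∧
    ¬ IsClosed (leafGroup t) ∧
    ¬ IsCompact (leafGroup t) := by
  have hppos : (0:ℝ) < 2 * Real.pi := by positivity
  have hsub : leafGroup t ⊆ {x : Fin 5 → AddCircle (2 * Real.pi) | x 0 = 0 ∧ x 2 = 0} := by
    rintro x ⟨u, v, rfl⟩; constructor <;> simp
  have hclosedT : IsClosed {x : Fin 5 → AddCircle (2 * Real.pi) | x 0 = 0 ∧ x 2 = 0} := by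
    have h0 : IsClosed {x : Fin 5 → AddCircle (2 * Real.pi) | x 0 = 0} :=
      isClosed_singleton.preimage (continuous_apply 0)
    have h2 : IsClosed {x : Fin 5 → AddCircle (2 * Real.pi) | x 2 = 0} :=
      isClosed_singleton.preimage (continuous_apply 2)
    exact h0.inter h2
  -- every point of the subtorus is in the closure of the leaf
  have hdense : {x : Fin 5 → AddCircle (2 * Real.pi) | x 0 = 0 ∧ x 2 = 0}
      ⊆ closure (leafGroup t) := by
    rintro x ⟨hx0, hx2⟩
    obtain ⟨u₀, hu₀⟩ := QuotientAddGroup.mk_surjective (x 3)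
    obtain ⟨v₀, hv₀⟩ := QuotientAddGroup.mk_surjective (x 4)
    have hfc : Continuous (fun c : AddCircle (2 * Real.pi) =>
        Function.update x 1 (((-t * u₀ : ℝ) : AddCircle (2 * Real.pi)) + c)) :=
      (continuous_const : Continuous fun _ : AddCircle (2 * Real.pi) => x).update 1
        (continuous_add_left _)
    have hmaps : Set.MapsTo (fun c : AddCircle (2 * Real.pi) =>
        Function.update x 1 (((-t * u₀ : ℝ) : AddCircle (2 * Real.pi)) + c))
        ((AddSubgroup.zmultiples ((-(2 * Real.pi) * t : ℝ) : AddCircle (2 * Real.pi)) :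
          AddSubgroup (AddCircle (2 * Real.pi))) : Set (AddCircle (2 * Real.pi)))
        (leafGroup t) := by
      rintro c hc
      obtain ⟨k, hk⟩ := AddSubgroup.mem_zmultiples_iff.mp hc
      refine ⟨u₀ + 2 * Real.pi * k, v₀, ?_⟩
      have hco : (((k : ℝ) * (-(2 * Real.pi) * t) : ℝ) : AddCircle (2 * Real.pi)) = c := by
        rw [← hk, ← AddCircle.coe_zsmul, zsmul_eq_mul]
      have h1 : ((-t * (u₀ + 2 * Real.pi * k) : ℝ) : AddCircle (2 * Real.pi))
          = ((-t * u₀ : ℝ) : AddCircle (2 * Real.pi)) + c := by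
        rw [← hco, ← AddCircle.coe_add]
        ring_nf
      have h3 : (((u₀ + 2 * Real.pi * k : ℝ)) : AddCircle (2 * Real.pi))
          = ((u₀ : ℝ) : AddCircle (2 * Real.pi)) := by
        rw [AddCircle.coe_add, show ((2 * Real.pi * k : ℝ) : AddCircle (2 * Real.pi)) = 0 from
          (AddCircle.coe_eq_zero_iff _).mpr ⟨k, by rw [zsmul_eq_mul]; ring⟩, add_zero]
      funext i
      fin_cases i
      · simpa using hx0
      · simpa using h1.symm
      · simpa using hx2
      · simpa [h3] using hu₀.symm
      · simpa using hv₀.symm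
    have hx1mem : x 1 - ((-t * u₀ : ℝ) : AddCircle (2 * Real.pi)) ∈
        closure ((AddSubgroup.zmultiples
          ((-(2 * Real.pi) * t : ℝ) : AddCircle (2 * Real.pi)) :
          AddSubgroup (AddCircle (2 * Real.pi))) : Set (AddCircle (2 * Real.pi))) :=
      (dense_zmultiples_of_irrational t ht) _
    have hmem := map_mem_closure hfc hx1mem hmaps
    have hxf : Function.update x 1 (((-t * u₀ : ℝ) : AddCircle (2 * Real.pi)) +
        (x 1 - ((-t * u₀ : ℝ) : AddCircle (2 * Real.pi)))) = x := by
      rw [add_sub_cancel]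
      exact Function.update_eq_self 1 x
    rwa [hxf] at hmem
  have hclos : closure (leafGroup t)
      = {x : Fin 5 → AddCircle (2 * Real.pi) | x 0 = 0 ∧ x 2 = 0} :=
    le_antisymm (closure_minimal hsub hclosedT) hdense
  -- the point ([0],[π],[0],[0],[0]) is in the closure but not in the leaf
  have hproper : leafGroup t ⊂ closure (leafGroup t) := by
    refine ⟨subset_closure, fun hcl => ?_⟩
    have hpt : (![0, ((Real.pi : ℝ) : AddCircle (2 * Real.pi)), 0, 0, 0] :
        Fin 5 → AddCircle (2 * Real.pi)) ∈ closure (leafGroup t) := by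
      rw [hclos]; constructor <;> simp
    obtain ⟨u, v, huv⟩ := hcl hpt
    have h3 := congrFun huv 3
    have h1 := congrFun huv 1
    simp only [Matrix.cons_val_three, Matrix.cons_val_one, Matrix.head_cons,
      Matrix.head_fin_const, Matrix.cons_val_zero] at h3 h1
    have h3' : ((u : ℝ) : AddCircle (2 * Real.pi)) = 0 := h3.symm
    rw [AddCircle.coe_eq_zero_iff] at h3'
    obtain ⟨k, hk⟩ := h3'
    have h1' : ((Real.pi - (-t * u) : ℝ) : AddCircle (2 * Real.pi)) = 0 := by
      rw [AddCircle.coe_sub, h1, sub_self]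
    rw [AddCircle.coe_eq_zero_iff] at h1'
    obtain ⟨m, hm⟩ := h1'
    rw [zsmul_eq_mul] at hk hm
    -- hk : k * 2π = u,   hm : m * 2π = π + t * u
    rcases eq_or_ne k 0 with hk0 | hk0
    · rw [hk0] at hk
      simp only [Int.cast_zero, zero_mul] at hk
      rw [← hk] at hm
      exact pi_ne_int_mul m (by nlinarith [hm])
    · have hkr : ((k : ℝ)) ≠ 0 := Int.cast_ne_zero.mpr hk0
      have htval : t = ((2 * m - 1 : ℤ) : ℝ) / ((2 * k : ℤ) : ℝ) := by
        have hπ : Real.pi ≠ 0 := Real.pi_ne_zero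
        have hu : u = (k : ℝ) * (2 * Real.pi) := hk.symm
        rw [hu] at hm
        push_cast
        have hk2 : ((2 : ℝ) * (k : ℝ)) ≠ 0 := mul_ne_zero two_ne_zero hkr
        field_simp
        nlinarith [hm, Real.pi_pos]
      exact (ht.ne_rat ((2 * m - 1 : ℤ) / (2 * k : ℤ)))
        (by rw [htval]; push_cast; ring)
  refine ⟨hclos, hproper, ?_, ?_⟩
  · intro h
    exact hproper.ne (h.closure_eq).symm
  · intro h
    exact hproper.ne (h.isClosed.closure_eq).symm
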